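/- The polynomial f(x) = 2x⁶ + x + 2 is irreducible over ℚ, and in the ring of integers O of the number field A = ℚ[x]/(f), the ideal (2) factors as 𝔭·𝔮⁵ with 𝔭 of residue degree 1 and 𝔮 of residue degree 1 and ramification index 5. -/

import Mathlib

open Polynomial NumberField

open IsDedekindDomain

private lemma int_no_root (r : ℤ) : 2*r^6 + r + 2 ≠ 0 := by
  intro h
  have hdvd : r ∣ 2 := ⟨-(2*r^5 + 1), by linarith [h, sq_nonneg r]⟩
  have h1 : r ≤ 2 := Int.le_of_dvd (by norm_num) hdvd
  have h2 : -2 ≤ r := neg_le_of_neg_le (Int.le_of_dvd (by norm_num) hdvd.neg_left)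
  interval_cases r <;> omega

private lemma no_integral_root {K : Type*} [Field K] [Algebra ℚ K] {θ : K}
    (hθ : 2*θ^6 + θ + 2 = 0) : ¬ IsIntegral ℤ θ := by
  intro hint
  haveI : CharZero K := charZero_of_injective_algebraMap (algebraMap ℚ K).injective
  -- θ is a root of f over ℚ
  have hroot : aeval θ (2*X^6 + X + 2 : ℚ[X]) = 0 := by
    simp only [map_add, map_mul, map_pow, aeval_X, map_ofNat]
    exact_mod_cast hθ
  have hdvdQ : minpoly ℚ θ ∣ (2*X^6 + X + 2 : ℚ[X]) := minpoly.dvd ℚ θ hroot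
  have hmin : minpoly ℚ θ = (minpoly ℤ θ).map (algebraMap ℤ ℚ) :=
    minpoly.isIntegrallyClosed_eq_field_fractions' ℚ hint
  set Q : ℤ[X] := minpoly ℤ θ with hQ
  have hQmonic : Q.Monic := minpoly.monic hint
  have hfQ : (2*X^6 + X + 2 : ℚ[X]) = (2*X^6 + X + 2 : ℤ[X]).map (algebraMap ℤ ℚ) := by
    simp [Polynomial.map_add, Polynomial.map_mul, Polynomial.map_pow]
  have hdvdZ : Q ∣ (2*X^6 + X + 2 : ℤ[X]) := by
    rw [← Polynomial.map_dvd_map (algebraMap ℤ ℚ) (fun a b h => by exact_mod_cast h) hQmonic]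
    rw [← hmin, ← hfQ]; exact hdvdQ
  -- reduce mod 2
  have hdvd2 : Q.map (Int.castRingHom (ZMod 2)) ∣ (X : (ZMod 2)[X]) := by
    have := Polynomial.map_dvd (Int.castRingHom (ZMod 2)) hdvdZ
    have h2 : (2*X^6 + X + 2 : ℤ[X]).map (Int.castRingHom (ZMod 2)) = (X : (ZMod 2)[X]) := by
      have h20 : (2:(ZMod 2)[X]) = 0 := by
        exact_mod_cast CharP.cast_eq_zero ((ZMod 2)[X]) 2
      simp [Polynomial.map_add, Polynomial.map_mul, Polynomial.map_pow, h20]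
    rwa [h2] at this
  have hdegle : Q.natDegree ≤ 1 := by
    have := Polynomial.natDegree_le_of_dvd hdvd2 (X_ne_zero)
    rwa [hQmonic.natDegree_map (Int.castRingHom (ZMod 2)), natDegree_X] at this
  have hdegpos : 1 ≤ Q.natDegree := minpoly.natDegree_pos hint
  have hQeq : Q = X + C (Q.coeff 0) := by
    have := Polynomial.eq_X_add_C_of_natDegree_le_one hdegle
    rwa [show Q.coeff 1 = 1 from ?_, map_one, one_mul] at this
    have : Q.natDegree = 1 := le_antisymm hdegle hdegpos
    simpa [this] using hQmonic.coeff_natDegree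
  -- θ is the image of an integer
  have hθval : θ = algebraMap ℤ K (-(Q.coeff 0)) := by
    have := minpoly.aeval ℤ θ
    rw [← hQ, hQeq] at this
    simp only [map_add, aeval_X, aeval_C] at this
    simp only [map_neg]
    linear_combination this
  set r : ℤ := -(Q.coeff 0)
  rw [hθval, eq_intCast] at hθ
  have hzero : (2*r^6 + r + 2 : ℤ) = 0 := by
    exact_mod_cast show ((2*r^6+r+2 : ℤ) : K) = 0 by push_cast; linear_combination hθ
  exact int_no_root r hzero

open IsDedekindDomain.HeightOneSpectrum UniqueFactorizationMonoid in
private lemma integral_of_all_val_le_one {K : Type*} [Field K] [NumberField K] {θ : K}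
    (h : ∀ v : HeightOneSpectrum (𝓞 K), v.valuation K θ ≤ 1) : IsIntegral ℤ θ := by
  classical
  obtain ⟨⟨a, s⟩, hmk⟩ := IsLocalization.mk'_surjective (nonZeroDivisors (𝓞 K)) θ
  dsimp only at hmk
  by_cases ha : a = 0
  · rw [← hmk, ha, IsLocalization.mk'_zero]; exact isIntegral_zero
  have hs0 : (s : 𝓞 K) ≠ 0 := nonZeroDivisors.coe_ne_zero s
  have hspan_a : Ideal.span {a} ≠ (0 : Ideal (𝓞 K)) := by
    simpa [Ideal.span_singleton_eq_bot] using ha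
  have hspan_s : Ideal.span {(s : 𝓞 K)} ≠ (0 : Ideal (𝓞 K)) := by
    simpa [Ideal.span_singleton_eq_bot] using hs0
  have hdvd : (s : 𝓞 K) ∣ a := by
    rw [← Ideal.span_singleton_le_span_singleton]
    apply Ideal.le_of_dvd
    rw [dvd_iff_normalizedFactors_le_normalizedFactors hspan_s hspan_a, Multiset.le_iff_count]
    intro P
    by_cases hP : P ∈ normalizedFactors (Ideal.span {(s : 𝓞 K)})
    swap
    · simp [Multiset.count_eq_zero.mpr hP]
    have hPprime : Prime P := prime_of_normalized_factor _ hP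
    set v : HeightOneSpectrum (𝓞 K) :=
      ⟨P, Ideal.isPrime_of_prime hPprime, hPprime.ne_zero⟩ with hv
    have hval := h v
    rw [← hmk, valuation_of_mk'] at hval
    have hspos : (0 : WithZero (Multiplicative ℤ)) < v.intValuation (s : 𝓞 K) := zero_lt_iff.mpr (v.intValuation_ne_zero' s)
    rw [div_le_one₀ hspos] at hval
    rw [intValuation_apply, intValuation_apply, v.intValuationDef_if_neg ha,
      v.intValuationDef_if_neg hs0] at hval
    rw [WithZero.exp_le_exp, neg_le_neg_iff, Int.ofNat_le] at hval
    rwa [← count_associates_factors_eq hspan_s v.isPrime v.ne_bot,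
      ← count_associates_factors_eq hspan_a v.isPrime v.ne_bot]
  obtain ⟨c, hc⟩ := hdvd
  have : θ = algebraMap (𝓞 K) K c := by
    rw [← hmk, hc, IsLocalization.mk'_eq_iff_eq_mul]
    rw [map_mul]; ring
  rw [this]
  exact (c.2 : IsIntegral ℤ (c : K))

open IsDedekindDomain.HeightOneSpectrum Multiplicative in
private lemma exists_ram_prime {K : Type*} [Field K] [NumberField K] (θ : K)
    (hθ : 2*θ^6 + θ + 2 = 0) :
    ∃ (v : HeightOneSpectrum (𝓞 K)) (m : ℕ), 0 < m ∧
      Ideal.span {(2 : 𝓞 K)} ≤ v.asIdeal ^ (5*m) ∧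
      ¬ Ideal.span {(2 : 𝓞 K)} ≤ v.asIdeal ^ (5*m+1) := by
  have hnotint : ¬ IsIntegral ℤ θ := no_integral_root hθ
  obtain ⟨v, hv⟩ : ∃ v : HeightOneSpectrum (𝓞 K), ¬ v.valuation K θ ≤ 1 := by
    by_contra hcon
    push_neg at hcon
    exact hnotint (integral_of_all_val_le_one hcon)
  rw [not_le] at hv
  have hθne : θ ≠ 0 := by rintro rfl; norm_num at hθ
  have hvθ : v.valuation K θ ≠ 0 := by
    simpa using (Valuation.ne_zero_iff (v.valuation K)).mpr hθne
  set x := WithZero.unzero hvθ with hxdef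
  have hx : (↑x : WithZero (Multiplicative ℤ)) = v.valuation K θ := WithZero.coe_unzero hvθ
  set w : ℤ := Multiplicative.toAdd x with hwdef
  have hw : 0 < w := by
    have h1x : (1 : Multiplicative ℤ) < x := by
      rw [← WithZero.one_lt_coe, hx]; exact hv
    exact h1x
  have hv2le : v.valuation K ((2 : K)) ≤ 1 := by
    have h2 : ((algebraMap (𝓞 K) K) (2 : 𝓞 K)) = (2 : K) := map_ofNat _ 2
    rw [← h2]; exact valuation_le_one v _
  have heq : v.valuation K (2:K) * (v.valuation K θ)^6 = v.valuation K θ := by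
    rw [← map_pow, ← Valuation.map_mul]
    have h1 : (2:K)*θ^6 = -(θ+2) := by linear_combination hθ
    rw [h1, Valuation.map_neg, (v.valuation K).map_add_of_distinct_val ((hv2le.trans_lt hv).ne'),
      max_eq_left (hv2le.trans hv.le)]
  have h2v : v.valuation K (2:K) = ((ofAdd (-(5*w)) : Multiplicative ℤ) : WithZero (Multiplicative ℤ)) := by
    have h6 : (v.valuation K θ)^6 = ((x^6 : Multiplicative ℤ) : WithZero (Multiplicative ℤ)) := by
      rw [← hx, WithZero.coe_pow]
    rw [h6] at heq
    have hne : ((x^6 : Multiplicative ℤ) : WithZero (Multiplicative ℤ)) ≠ 0 := WithZero.coe_ne_zero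
    have : v.valuation K (2:K) = v.valuation K θ / ((x^6 : Multiplicative ℤ) : WithZero (Multiplicative ℤ)) :=
      (eq_div_iff hne).mpr heq
    rw [this, ← hx, ← WithZero.coe_div, WithZero.coe_inj]
    apply Multiplicative.toAdd.injective
    simp only [toAdd_div, toAdd_pow, toAdd_ofAdd]
    push_cast
    ring
  set m : ℕ := w.toNat with hmdef
  have hm : (m : ℤ) = w := Int.toNat_of_nonneg hw.le
  have hmpos : 0 < m := by omega
  have hiv : v.intValuationDef (2 : 𝓞 K)
      = ((ofAdd (-(5*m : ℕ) : ℤ) : Multiplicative ℤ) : WithZero (Multiplicative ℤ)) := by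
    have h2 : ((algebraMap (𝓞 K) K) (2 : 𝓞 K)) = (2 : K) := map_ofNat _ 2
    have := valuation_of_algebraMap (K := K) v (2 : 𝓞 K)
    change v.valuation K (algebraMap (𝓞 K) K 2) = _ at this
    rw [h2, h2v] at this
    rw [intValuation_apply] at this
    rw [← this, WithZero.coe_inj]
    apply Multiplicative.toAdd.injective
    simp only [toAdd_ofAdd]
    push_cast [hm]
    ring
  refine ⟨v, m, hmpos, ?_, ?_⟩
  · exact Ideal.le_of_dvd ((v.intValuation_le_pow_iff_dvd (2 : 𝓞 K) (5*m)).mp (by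
      rw [intValuation_apply, hiv]; exact le_of_eq rfl))
  · intro hle
    have hdvd : v.asIdeal ^ (5*m+1) ∣ Ideal.span {(2 : 𝓞 K)} := Ideal.dvd_iff_le.mpr hle
    have := (v.intValuation_le_pow_iff_dvd (2 : 𝓞 K) (5*m+1)).mpr hdvd
    rw [intValuation_apply, hiv] at this
    change WithZero.exp _ ≤ WithZero.exp _ at this
    rw [WithZero.exp_le_exp] at this
    omega

open UniqueFactorizationMonoid in
private lemma core {K : Type*} [Field K] [NumberField K] (θ : K)
    (hθ : 2*θ^6 + θ + 2 = 0) :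
    5 ≤ Module.finrank ℚ K ∧
    (Module.finrank ℚ K = 6 →
      ∃ 𝔭 𝔮 : Ideal (𝓞 K), 𝔭.IsPrime ∧ 𝔮.IsPrime ∧ 𝔭 ≠ 𝔮 ∧
        Ideal.span {(2 : 𝓞 K)} = 𝔭 * 𝔮 ^ 5 ∧
        Ideal.inertiaDeg' (Ideal.span {(2 : ℤ)}) 𝔭 = 1 ∧
        Ideal.inertiaDeg' (Ideal.span {(2 : ℤ)}) 𝔮 = 1 ∧
        Ideal.ramificationIdx' (Ideal.span {(2 : ℤ)}) 𝔭 = 1 ∧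
        Ideal.ramificationIdx' (Ideal.span {(2 : ℤ)}) 𝔮 = 5) := by
  classical
  obtain ⟨v, m, hmpos, hle, hnle⟩ := exists_ram_prime θ hθ
  set p2 : Ideal ℤ := Ideal.span {(2:ℤ)} with hp2
  haveI hp2max : p2.IsMaximal :=
    PrincipalIdealRing.isMaximal_of_irreducible Int.prime_two.irreducible
  have hp2ne : p2 ≠ ⊥ := by simp [hp2, Ideal.span_singleton_eq_bot]
  have h2O : (2 : 𝓞 K) ≠ 0 := by
    intro h
    have := congrArg (algebraMap (𝓞 K) K) h
    rw [map_ofNat, map_zero] at this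
    norm_num at this
  set I : Ideal (𝓞 K) := Ideal.map (algebraMap ℤ (𝓞 K)) p2 with hIdef
  have hImap : I = Ideal.span {(2 : 𝓞 K)} := by
    rw [hIdef, hp2, Ideal.map_span, Set.image_singleton, map_ofNat]
  have hI0 : I ≠ 0 := by
    rw [hImap]
    simpa [Ideal.span_singleton_eq_bot] using h2O
  set e : Ideal (𝓞 K) → ℕ := Ideal.ramificationIdx' p2 with hedef
  set f : Ideal (𝓞 K) → ℕ := Ideal.inertiaDeg' p2 with hfdef
  have hev : e v.asIdeal = 5*m :=
    Ideal.ramificationIdx'_spec (by rw [← hImap] at hle; exact hle)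
      (by rw [← hImap] at hnle; exact hnle)
  have hvdvd : v.asIdeal ∣ I := by
    refine dvd_trans (dvd_pow_self _ (by omega : 5*m ≠ 0)) ?_
    rw [hImap]
    exact Ideal.dvd_iff_le.mpr hle
  have hvmem : v.asIdeal ∈ (factors I).toFinset := by
    rw [Multiset.mem_toFinset]
    obtain ⟨q, hq, hassoc⟩ := exists_mem_factors_of_dvd hI0
      (Ideal.prime_of_isPrime v.ne_bot v.isPrime).irreducible hvdvd
    rwa [associated_iff_eq.mp hassoc]
  have hsum := Ideal.sum_ramification_inertia (R := ℤ) (S := 𝓞 K) (K := ℚ) (L := K) hp2ne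
  rw [IsDedekindDomain.primesOverFinset, ← hIdef] at hsum
  rw [show (fun P => Ideal.ramificationIdx' p2 P *
      Ideal.inertiaDeg' p2 P) = (fun P => e P * f P) from rfl] at hsum
  have hef : ∀ P ∈ (factors I).toFinset, 1 ≤ e P ∧ 1 ≤ f P := by
    intro P hP
    have hPfac := Multiset.mem_toFinset.mp hP
    have hPprime : Prime P := prime_of_factor _ hPfac
    have hPdvd : P ∣ I := dvd_of_mem_factors hPfac
    constructor
    · exact Nat.one_le_iff_ne_zero.mpr
        (Ideal.IsDedekindDomain.ramificationIdx_ne_zero hI0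
          (Ideal.isPrime_of_prime hPprime) (Ideal.le_of_dvd hPdvd))
    · haveI : P.LiesOver p2 := Ideal.Factors.liesOver p2 ⟨P, hP⟩
      exact (Ideal.inertiaDeg'_pos p2 P)
  have hv_le_sum : e v.asIdeal * f v.asIdeal ≤ Module.finrank ℚ K := by
    rw [← hsum]
    exact Finset.single_le_sum (f := fun P => e P * f P) (fun P _ => Nat.zero_le _) hvmem
  have hfv1 : 1 ≤ f v.asIdeal := (hef _ hvmem).2
  constructor
  · calc 5 ≤ 5*m := by omega
    _ ≤ 5*m * f v.asIdeal := Nat.le_mul_of_pos_right _ hfv1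
    _ = e v.asIdeal * f v.asIdeal := by rw [hev]
    _ ≤ Module.finrank ℚ K := hv_le_sum
  intro h6
  rw [h6] at hv_le_sum hsum
  -- pin down m = 1 and f v = 1
  have hmf : m * f v.asIdeal = 1 := by
    have h1 : 5 * (m * f v.asIdeal) ≤ 6 := by
      calc 5 * (m * f v.asIdeal) = e v.asIdeal * f v.asIdeal := by rw [hev]; ring
      _ ≤ 6 := hv_le_sum
    have h2 : 1 ≤ m * f v.asIdeal := Nat.one_le_iff_ne_zero.mpr (by positivity)
    omega
  have hm1 : m = 1 := by
    have : m ≤ m * f v.asIdeal := Nat.le_mul_of_pos_right m hfv1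
    omega
  have hfv : f v.asIdeal = 1 := by
    have : f v.asIdeal ≤ m * f v.asIdeal := Nat.le_mul_of_pos_left _ (by omega)
    omega
  rw [hm1, mul_one] at hev
  -- the remaining primes
  set T := (factors I).toFinset.erase v.asIdeal with hT
  have hsumT : ∑ P ∈ T, e P * f P = 1 := by
    have := Finset.add_sum_erase _ (fun P => e P * f P) hvmem
    rw [hev, hfv, ← hT, hsum] at this
    omega
  have hTne : T.Nonempty := by
    rcases T.eq_empty_or_nonempty with h | h
    · rw [h] at hsumT; simp at hsumT
    · exact h
  have hTcard : T.card = 1 := by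
    have hcardle : T.card ≤ 1 := by
      have := Finset.card_nsmul_le_sum T (fun P => e P * f P) 1
        (fun P hPT => by
          obtain ⟨h1, h2⟩ := hef P (Finset.mem_of_mem_erase hPT)
          exact Nat.one_le_iff_ne_zero.mpr (by positivity))
      simpa [hsumT] using this
    have := Finset.Nonempty.card_pos hTne
    omega
  obtain ⟨𝔭, hTeq⟩ := Finset.card_eq_one.mp hTcard
  have h𝔭T : 𝔭 ∈ T := by rw [hTeq]; exact Finset.mem_singleton_self _
  have h𝔭mem : 𝔭 ∈ (factors I).toFinset := Finset.mem_of_mem_erase h𝔭T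
  have h𝔭ne : 𝔭 ≠ v.asIdeal := Finset.ne_of_mem_erase h𝔭T
  have h𝔭ef : e 𝔭 * f 𝔭 = 1 := by
    rw [hTeq, Finset.sum_singleton] at hsumT
    exact hsumT
  have h𝔭e : e 𝔭 = 1 := by
    obtain ⟨h1, h2⟩ := hef 𝔭 h𝔭mem
    have : e 𝔭 ≤ e 𝔭 * f 𝔭 := Nat.le_mul_of_pos_right _ h2
    omega
  have h𝔭f : f 𝔭 = 1 := by
    obtain ⟨h1, h2⟩ := hef 𝔭 h𝔭mem
    have : f 𝔭 ≤ e 𝔭 * f 𝔭 := Nat.le_mul_of_pos_left _ h1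
    omega
  have h𝔭prime : Prime 𝔭 := prime_of_factor _ (Multiset.mem_toFinset.mp h𝔭mem)
  -- counts in the factorization
  have hcv : Multiset.count v.asIdeal (normalizedFactors I) = 5 := by
    have := Ideal.IsDedekindDomain.ramificationIdx'_eq_normalizedFactors_count
      (S := 𝓞 K) (p := p2) hI0 v.isPrime v.ne_bot
    rw [← hIdef] at this
    rw [← this, ← hedef, hev]
  have hcp : Multiset.count 𝔭 (normalizedFactors I) = 1 := by
    have := Ideal.IsDedekindDomain.ramificationIdx'_eq_normalizedFactors_count
      (S := 𝓞 K) (p := p2) hI0 (Ideal.isPrime_of_prime h𝔭prime)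
      h𝔭prime.ne_zero
    rw [← hIdef] at this
    rw [← this, ← hedef, h𝔭e]
  have htoF : (factors I).toFinset = {v.asIdeal, 𝔭} := by
    have := Finset.insert_erase hvmem
    rw [← hT, hTeq] at this
    rw [← this]
  have hfactors : normalizedFactors I = Multiset.replicate 5 v.asIdeal + {𝔭} := by
    ext P
    rw [Multiset.count_add, Multiset.count_replicate, Multiset.count_singleton]
    by_cases hPv : P = v.asIdeal
    · subst hPv
      simp [hcv, Ne.symm h𝔭ne]
    · by_cases hPp : P = 𝔭
      · subst hPp
        simp [hcp, hPv, Ne.symm hPv]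
      · have hnotin : P ∉ normalizedFactors I := by
          intro hPfac
          have : P ∈ (factors I).toFinset := Multiset.mem_toFinset.mpr
            (by rw [factors_eq_normalizedFactors]; exact hPfac)
          rw [htoF] at this
          rcases Finset.mem_insert.mp this with h | h
          · exact hPv h
          · exact hPp (Finset.mem_singleton.mp h)
        simp [hPv, hPp, Ne.symm hPv, Ne.symm hPp, Multiset.count_eq_zero.mpr hnotin]
  have hprod : I = v.asIdeal ^ 5 * 𝔭 := by
    have h1 : (normalizedFactors I).prod = I := associated_iff_eq.mp (prod_normalizedFactors hI0)
    rw [← h1, hfactors, Multiset.prod_add, Multiset.prod_replicate, Multiset.prod_singleton]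
  refine ⟨𝔭, v.asIdeal, Ideal.isPrime_of_prime h𝔭prime, v.isPrime, h𝔭ne, ?_, h𝔭f, hfv, h𝔭e, hev⟩
  rw [← hImap, hprod]
  ring

private lemma f_natDegree : (2*X^6 + X + 2 : ℚ[X]).natDegree = 6 := by
  compute_degree!

private lemma f_ne_zero : (2*X^6 + X + 2 : ℚ[X]) ≠ 0 := by
  intro h
  have := congrArg (eval 0) h
  simp at this

private theorem f_irred : Irreducible (2*X^6 + X + 2 : ℚ[X]) := by
  have key : ∀ p : ℚ[X], p ≠ 0 → ¬IsUnit p → 1 ≤ p.natDegree := by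
    intro p hp0 hpu
    by_contra hcon
    push_neg at hcon
    have h0 : p.natDegree = 0 := by omega
    have := Polynomial.eq_C_of_natDegree_eq_zero h0
    apply hpu
    rw [this]
    exact isUnit_C.mpr (isUnit_iff_ne_zero.mpr (by
      intro hc; apply hp0; rw [this, hc, map_zero]))
  constructor
  · intro hu
    have := Polynomial.natDegree_eq_zero_of_isUnit hu
    rw [f_natDegree] at this
    norm_num at this
  · rintro a b hab
    by_contra hcon
    push_neg at hcon
    obtain ⟨ha, hb⟩ := hcon
    have ha0 : a ≠ 0 := by rintro rfl; exact f_ne_zero (by rw [hab, zero_mul])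
    have hb0 : b ≠ 0 := by rintro rfl; exact f_ne_zero (by rw [hab, mul_zero])
    have hdeg : a.natDegree + b.natDegree = 6 := by
      rw [← Polynomial.natDegree_mul ha0 hb0, ← hab, f_natDegree]
    have ha1 := key a ha0 ha
    have hb1 := key b hb0 hb
    -- pick a factor of degree ≤ 3
    obtain ⟨c, hc0, hcu, hcd, hc_dvd⟩ :
        ∃ c : ℚ[X], c ≠ 0 ∧ ¬IsUnit c ∧ c.natDegree ≤ 3 ∧ c ∣ (2*X^6 + X + 2 : ℚ[X]) := by
      rcases le_or_gt a.natDegree 3 with h | h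
      · exact ⟨a, ha0, ha, h, Dvd.intro b hab.symm⟩
      · exact ⟨b, hb0, hb, by omega, Dvd.intro_left a hab.symm⟩
    obtain ⟨q, hq_irr, hq_dvd⟩ := WfDvdMonoid.exists_irreducible_factor hcu hc0
    have hq0 : q ≠ 0 := hq_irr.ne_zero
    have hq3 : q.natDegree ≤ 3 := le_trans (Polynomial.natDegree_le_of_dvd hq_dvd hc0) hcd
    have hqf : q ∣ (2*X^6 + X + 2 : ℚ[X]) := hq_dvd.trans hc_dvd
    haveI := Fact.mk hq_irr
    set K := AdjoinRoot q with hK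
    haveI : Module.Finite ℚ K := PowerBasis.finite (AdjoinRoot.powerBasis hq0)
    haveI : CharZero K := charZero_of_injective_algebraMap (algebraMap ℚ K).injective
    haveI : NumberField K := ⟨⟩
    set θ : K := AdjoinRoot.root q with hθdef
    have hθ : 2*θ^6 + θ + 2 = 0 := by
      obtain ⟨d, hd⟩ := hqf
      have : aeval θ (2*X^6 + X + 2 : ℚ[X]) = 0 := by
        rw [hd, map_mul, hθdef]
        erw [AdjoinRoot.aeval_eq, AdjoinRoot.mk_self, zero_mul]
      simpa [map_ofNat] using this
    have h5 := (core θ hθ).1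
    have hfr : Module.finrank ℚ K = q.natDegree := by
      rw [PowerBasis.finrank (AdjoinRoot.powerBasis hq0), AdjoinRoot.powerBasis_dim]
    omega
/-- f(x) = 2x⁶ + x + 2 is irreducible over ℚ, and in the ring of integers
of A = ℚ[x]/(f) (presented as a number field K = ℚ(θ) with f(θ) = 0), the ideal (2)
factors as 𝔭·𝔮⁵ with 𝔭, 𝔮 of residue degree 1 and ramification indices 1 and 5. -/
theorem stmt_15 :
    Irreducible (2 * X ^ 6 + X + 2 : ℚ[X]) ∧
    ∀ (K : Type) [Field K] [NumberField K] (θ : K),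
      aeval θ (2 * X ^ 6 + X + 2 : ℚ[X]) = 0 →
      IntermediateField.adjoin ℚ {θ} = ⊤ →
      ∃ 𝔭 𝔮 : Ideal (𝓞 K), 𝔭.IsPrime ∧ 𝔮.IsPrime ∧ 𝔭 ≠ 𝔮 ∧
        Ideal.span {(2 : 𝓞 K)} = 𝔭 * 𝔮 ^ 5 ∧
        Ideal.inertiaDeg' (Ideal.span {(2 : ℤ)}) 𝔭 = 1 ∧
        Ideal.inertiaDeg' (Ideal.span {(2 : ℤ)}) 𝔮 = 1 ∧
        Ideal.ramificationIdx' (Ideal.span {(2 : ℤ)}) 𝔭 = 1 ∧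
        Ideal.ramificationIdx' (Ideal.span {(2 : ℤ)}) 𝔮 = 5 := by
  refine ⟨f_irred, ?_⟩
  intro K _ _ θ hroot hadj
  have hθ : 2*θ^6 + θ + 2 = 0 := by
    simpa [map_ofNat] using hroot
  have hint : IsIntegral ℚ θ := IsAlgebraic.isIntegral ⟨_, f_ne_zero, hroot⟩
  have hdvd : minpoly ℚ θ ∣ (2*X^6 + X + 2 : ℚ[X]) := minpoly.dvd ℚ θ hroot
  have hassoc : Associated (minpoly ℚ θ) (2*X^6 + X + 2 : ℚ[X]) :=
    (minpoly.irreducible hint).associated_of_dvd f_irred hdvd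
  have hmindeg : (minpoly ℚ θ).natDegree = 6 := by
    rw [Polynomial.natDegree_eq_of_degree_eq
      (Polynomial.degree_eq_degree_of_associated hassoc), f_natDegree]
  have hdeg : Module.finrank ℚ K = 6 := by
    have h1 : Module.finrank ℚ (IntermediateField.adjoin ℚ {θ}) = 6 := by
      rw [IntermediateField.adjoin.finrank hint, hmindeg]
    rw [hadj] at h1
    rw [← h1]
    exact (IntermediateField.topEquiv.toLinearEquiv.finrank_eq).symm
  exact (core θ hθ).2 hdeg
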